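/- Let ρ > 0 and set l = 2(ρ−1). The function v*_ρ(y) := −2ρ log(1+|y|²) + log(8ρ) is a C² solution of Δv(y) + (1+|y|²)^l e^{v(y)} = 0 on ℝ²; moreover y ↦ (1+|y|²)^l e^{v*_ρ(y)} is integrable on ℝ² and (1/(2π)) ∫_{ℝ²} (1+|y|²)^l e^{v*_ρ(y)} dy = 4ρ = 4 + 2l. -/

import Mathlib

open MeasureTheory Real

/-- The Euclidean Laplacian on `ℝ²`: the sum of the two pure second partial
derivatives in the standard coordinate directions. -/
noncomputable def planeLaplacian (v : EuclideanSpace ℝ (Fin 2) → ℝ)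
    (y : EuclideanSpace ℝ (Fin 2)) : ℝ :=
  ∑ i : Fin 2,
    fderiv ℝ (fun z => fderiv ℝ v z (EuclideanSpace.single i 1)) y
      (EuclideanSpace.single i 1)

local notation "E2" => EuclideanSpace ℝ (Fin 2)

lemma q_pos (y : E2) : (0:ℝ) < 1 + ‖y‖ ^ 2 := by positivity

lemma hasFDerivAt_q (y : E2) :
    HasFDerivAt (fun z : E2 => 1 + ‖z‖ ^ 2) (2 • (innerSL ℝ y)) y := by
  simpa using ((hasFDerivAt_id y).norm_sq).const_add 1

lemma hasFDerivAt_v (ρ : ℝ) (y : E2) :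
    HasFDerivAt (fun z : E2 => -2 * ρ * Real.log (1 + ‖z‖ ^ 2) + Real.log (8 * ρ))
      ((-2 * ρ) • (((1 + ‖y‖ ^ 2)⁻¹) • (2 • (innerSL ℝ y)))) y :=
  ((((hasFDerivAt_q y).log (q_pos y).ne')).const_mul (-2 * ρ)).add_const (Real.log (8 * ρ))

lemma first_partial (ρ : ℝ) (i : Fin 2) (z : E2) :
    fderiv ℝ (fun w : E2 => -2 * ρ * Real.log (1 + ‖w‖ ^ 2) + Real.log (8 * ρ)) z
      (EuclideanSpace.single i 1)
      = (-4 * ρ) * (z i * (1 + ‖z‖ ^ 2)⁻¹) := by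
  rw [(hasFDerivAt_v ρ z).fderiv]
  have h2 : (innerSL ℝ z) (EuclideanSpace.single i 1) = z i := by
    rw [innerSL_apply_apply, EuclideanSpace.inner_single_right]; simp
  simp only [ContinuousLinearMap.smul_apply, smul_eq_mul, nsmul_eq_mul, Nat.cast_ofNat, h2]
  ring

lemma second_partial (ρ : ℝ) (i : Fin 2) (y : E2) :
    fderiv ℝ (fun z => fderiv ℝ (fun w : E2 => -2 * ρ * Real.log (1 + ‖w‖ ^ 2)
        + Real.log (8 * ρ)) z (EuclideanSpace.single i 1)) y (EuclideanSpace.single i 1)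
      = (-4 * ρ) * ((1 + ‖y‖ ^ 2) - 2 * (y i) ^ 2) / (1 + ‖y‖ ^ 2) ^ 2 := by
  have hfun : (fun z : E2 => fderiv ℝ (fun w : E2 => -2 * ρ * Real.log (1 + ‖w‖ ^ 2)
      + Real.log (8 * ρ)) z (EuclideanSpace.single i 1))
      = fun z : E2 => (-4 * ρ) * (z i * (1 + ‖z‖ ^ 2)⁻¹) := by
    funext z; exact first_partial ρ i z
  rw [hfun]
  have hp : HasFDerivAt (fun z : E2 => z i) (EuclideanSpace.proj (𝕜 := ℝ) i) y :=
    (EuclideanSpace.proj (𝕜 := ℝ) i).hasFDerivAt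
  have hinv : HasFDerivAt (fun z : E2 => (1 + ‖z‖ ^ 2)⁻¹)
      ((-((1 + ‖y‖ ^ 2) ^ 2)⁻¹) • (2 • (innerSL ℝ y))) y :=
    (hasDerivAt_inv (q_pos y).ne').comp_hasFDerivAt y (hasFDerivAt_q y)
  have hm : HasFDerivAt (fun z : E2 => (-4 * ρ) * (z i * (1 + ‖z‖ ^ 2)⁻¹)) _ y :=
    (hp.mul hinv).const_mul (-4 * ρ)
  rw [hm.fderiv]
  have h1 : EuclideanSpace.proj (𝕜 := ℝ) i (EuclideanSpace.single i 1) = 1 := by simp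
  have h2 : (innerSL ℝ y) (EuclideanSpace.single i 1) = y i := by
    rw [innerSL_apply_apply, EuclideanSpace.inner_single_right]; simp
  simp only [ContinuousLinearMap.smul_apply, ContinuousLinearMap.add_apply, smul_eq_mul,
    nsmul_eq_mul, Nat.cast_ofNat, h1, h2]
  have hq := (q_pos y).ne'
  field_simp
  ring

lemma norm_sq_eq (y : E2) : ‖y‖ ^ 2 = (y 0) ^ 2 + (y 1) ^ 2 := by
  rw [EuclideanSpace.norm_eq, Real.sq_sqrt (by positivity)]
  simp [Fin.sum_univ_two, sq_abs]

lemma lap_eq (ρ : ℝ) (y : E2) :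
    planeLaplacian (fun z => -2 * ρ * Real.log (1 + ‖z‖ ^ 2) + Real.log (8 * ρ)) y
      = -8 * ρ / (1 + ‖y‖ ^ 2) ^ 2 := by
  unfold planeLaplacian
  rw [Fin.sum_univ_two, second_partial, second_partial]
  have hn := norm_sq_eq y
  rw [← add_div]
  congr 1
  linear_combination (-8 * ρ) * hn

lemma weight_eq (ρ l : ℝ) (hρ : 0 < ρ) (hl : l = 2 * (ρ - 1)) (y : E2) :
    (1 + ‖y‖ ^ 2) ^ l * Real.exp (-2 * ρ * Real.log (1 + ‖y‖ ^ 2) + Real.log (8 * ρ))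
      = 8 * ρ * ((1 + ‖y‖ ^ 2) ^ 2)⁻¹ := by
  have hq := q_pos y
  rw [Real.exp_add, Real.exp_log (by positivity)]
  have h1 : Real.exp (-2 * ρ * Real.log (1 + ‖y‖ ^ 2)) = (1 + ‖y‖ ^ 2) ^ (-2 * ρ) := by
    rw [Real.rpow_def_of_pos hq, mul_comm]
  have h3 : (1 + ‖y‖ ^ 2) ^ l * (1 + ‖y‖ ^ 2) ^ (-2 * ρ) = ((1 + ‖y‖ ^ 2) ^ 2)⁻¹ := by
    rw [← Real.rpow_add hq, show l + -2 * ρ = -((2 : ℕ) : ℝ) by rw [hl]; push_cast; ring,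
      Real.rpow_neg hq.le, Real.rpow_natCast]
  rw [h1, show (1 + ‖y‖ ^ 2) ^ l * ((1 + ‖y‖ ^ 2) ^ (-2 * ρ) * (8 * ρ))
      = ((1 + ‖y‖ ^ 2) ^ l * (1 + ‖y‖ ^ 2) ^ (-2 * ρ)) * (8 * ρ) from by ring, h3]
  ring

lemma integral_Ioi_half : ∫ r in Set.Ioi (0:ℝ), r * ((1 + r ^ 2) ^ 2)⁻¹ = 1 / 2 := by
  have hderiv : ∀ x ∈ Set.Ici (0:ℝ),
      HasDerivAt (fun r : ℝ => -(1/2) * (1 + r ^ 2)⁻¹) (x * ((1 + x ^ 2) ^ 2)⁻¹) x := by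
    intro x _
    have h : HasDerivAt (fun r : ℝ => 1 + r ^ 2) (2 * x) x := by
      simpa using ((hasDerivAt_pow 2 x).const_add 1)
    have h2 := (h.inv (by positivity)).const_mul (-(1/2 : ℝ))
    refine h2.congr_deriv ?_
    ring
  have htend : Filter.Tendsto (fun r : ℝ => -(1/2) * (1 + r ^ 2)⁻¹) Filter.atTop (nhds 0) := by
    have : Filter.Tendsto (fun r : ℝ => 1 + r ^ 2) Filter.atTop Filter.atTop := by
      apply Filter.tendsto_atTop_add_const_left
      exact (Filter.tendsto_pow_atTop (two_ne_zero)).comp Filter.tendsto_id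
    have := (tendsto_inv_atTop_zero).comp this
    simpa using this.const_mul (-(1/2 : ℝ))
  have key := integral_Ioi_of_hasDerivAt_of_nonneg' hderiv
    (fun x hx => by have : (0:ℝ) < x := hx; positivity) htend
  rw [key]
  norm_num

lemma integral_radial : ∫ y : E2, ((1 + ‖y‖ ^ 2) ^ 2)⁻¹ = π := by
  have h := integral_fun_norm_addHaar (volume : Measure E2)
    (fun r : ℝ => ((1 + r ^ 2) ^ 2)⁻¹)
  rw [h]
  have hdim : Module.finrank ℝ E2 = 2 := finrank_euclideanSpace_fin
  rw [hdim]
  have hball : volume.real (Metric.ball (0 : E2) 1) = π := by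
    rw [measureReal_def, EuclideanSpace.volume_ball]
    norm_num
    exact Real.sq_sqrt Real.pi_pos.le
  rw [hball]
  have : ∫ y in Set.Ioi (0:ℝ), y ^ (2 - 1) • ((1 + y ^ 2) ^ 2)⁻¹
      = ∫ r in Set.Ioi (0:ℝ), r * ((1 + r ^ 2) ^ 2)⁻¹ := by
    norm_num
  rw [this, integral_Ioi_half]
  simp only [smul_eq_mul, nsmul_eq_mul]
  push_cast
  ring

lemma integ_radial : Integrable (fun y : E2 => ((1 + ‖y‖ ^ 2) ^ 2)⁻¹) := by
  have h4 : ((Module.finrank ℝ E2 : ℝ)) < 4 := by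
    rw [finrank_euclideanSpace_fin]; norm_num
  have hi := (integrable_one_add_norm (E := E2) (μ := volume) h4).const_mul 4
  refine hi.mono' ?_ ?_
  · apply Continuous.aestronglyMeasurable
    exact (continuous_const.add ((continuous_norm).pow 2)).pow 2 |>.inv₀
      (fun y => (pow_pos (q_pos y) 2).ne')
  · filter_upwards with y
    set t := ‖y‖ with ht
    have ht0 : 0 ≤ t := norm_nonneg y
    have hr : (1 + t) ^ (-(4:ℝ)) = ((1 + t) ^ (4:ℕ))⁻¹ := by
      rw [show (-(4:ℝ)) = -((4:ℕ):ℝ) by norm_num, Real.rpow_neg (by positivity),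
        Real.rpow_natCast]
    rw [Real.norm_of_nonneg (by positivity), hr]
    have hsq : (1 + t) ^ 2 ≤ 2 * (1 + t ^ 2) := by nlinarith [sq_nonneg (1 - t)]
    have h4' : (1 + t) ^ (4:ℕ) ≤ 4 * (1 + t ^ 2) ^ 2 := by nlinarith [sq_nonneg (1 + t)]
    rw [inv_eq_one_div, inv_eq_one_div, mul_div_assoc' 4 1, mul_one,
      div_le_div_iff₀ (by positivity) (by positivity)]
    linarith [mul_le_mul_of_nonneg_left h4' (le_of_lt (show (0:ℝ) < 1 by norm_num))]

/-- For `ρ > 0` and `l = 2(ρ-1)`, the function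
`v*_ρ(y) = -2ρ log(1+|y|²) + log(8ρ)` is a `C²` solution of
`Δv + (1+|y|²)^l e^v = 0` on `ℝ²`, the weight `(1+|y|²)^l e^{v*_ρ}` is
integrable, and `(1/2π) ∫ (1+|y|²)^l e^{v*_ρ} = 4ρ = 4 + 2l`. -/
theorem special_solution (ρ l : ℝ) (hρ : 0 < ρ) (hl : l = 2 * (ρ - 1)) :
    ContDiff ℝ 2 (fun y : EuclideanSpace ℝ (Fin 2) =>
        -2 * ρ * Real.log (1 + ‖y‖ ^ 2) + Real.log (8 * ρ)) ∧
    (∀ y : EuclideanSpace ℝ (Fin 2),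
      planeLaplacian (fun z => -2 * ρ * Real.log (1 + ‖z‖ ^ 2) + Real.log (8 * ρ)) y
        + (1 + ‖y‖ ^ 2) ^ l *
          Real.exp (-2 * ρ * Real.log (1 + ‖y‖ ^ 2) + Real.log (8 * ρ)) = 0) ∧
    Integrable (fun y : EuclideanSpace ℝ (Fin 2) =>
      (1 + ‖y‖ ^ 2) ^ l *
        Real.exp (-2 * ρ * Real.log (1 + ‖y‖ ^ 2) + Real.log (8 * ρ))) ∧
    (1 / (2 * Real.pi)) * (∫ y : EuclideanSpace ℝ (Fin 2),
      (1 + ‖y‖ ^ 2) ^ l *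
        Real.exp (-2 * ρ * Real.log (1 + ‖y‖ ^ 2) + Real.log (8 * ρ))) = 4 * ρ ∧
    4 * ρ = 4 + 2 * l := by
  have hfun : (fun y : E2 => (1 + ‖y‖ ^ 2) ^ l *
      Real.exp (-2 * ρ * Real.log (1 + ‖y‖ ^ 2) + Real.log (8 * ρ)))
      = fun y : E2 => 8 * ρ * ((1 + ‖y‖ ^ 2) ^ 2)⁻¹ := by
    funext y; exact weight_eq ρ l hρ hl y
  refine ⟨?_, ?_, ?_, ?_, by rw [hl]; ring⟩
  · have hq : ContDiff ℝ 2 (fun y : E2 => 1 + ‖y‖ ^ 2) :=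
      contDiff_const.add (contDiff_norm_sq ℝ)
    exact (contDiff_const.mul (hq.log fun y => (q_pos y).ne')).add contDiff_const
  · intro y
    rw [lap_eq, weight_eq ρ l hρ hl y]
    have hq := (q_pos y).ne'
    field_simp
    ring
  · rw [hfun]
    exact integ_radial.const_mul _
  · rw [hfun, integral_const_mul, integral_radial]
    field_simp
    ring
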